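/- Let m > 1, N* = (4m+2)/(m+1) and σ* = 2(m−1)/(m+1). Suppose f : I → (0,∞) is a positive function on an open interval I ⊂ (0,∞) such that ξ ↦ f(ξ)^m is twice differentiable on I and f satisfies the profile ODE with parameters N = N* and σ = σ*, i.e. (f^m)''(ξ) + ((N*−1)/ξ)(f^m)'(ξ) − f(ξ)/(m−1) + ξ^{σ*} f(ξ)^m = 0 on I. Define, for η in the interval J obtained from I via ξ = ((2m/(m+1)) η)^{(m+1)/(2m)}, the function F(η) := ((2m/(m+1)) η)^{1/m} · f(((2m/(m+1)) η)^{(m+1)/(2m)}). Then F satisfies the one-dimensional homogeneous profile ODE (F^m)''(η) − F(η)/(m−1) + F(η)^m = 0 on J. -/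

import Mathlib

open Set

/-- the transformation
`ξ = ((2m/(m+1))η)^{(m+1)/(2m)}`, `F(η) = ((2m/(m+1))η)^{1/m} f(ξ(η))`
maps positive solutions of the profile ODE with parameters `N* = (4m+2)/(m+1)`
and `σ* = 2(m-1)/(m+1)` to solutions of the one-dimensional homogeneous profile
ODE `(F^m)'' - F/(m-1) + F^m = 0`. -/
theorem transform_to_one_dimensional_homogeneous
    (m : ℝ) (hm : 1 < m) (a b : ℝ) (hI : Ioo a b ⊆ Ioi (0:ℝ))
    (f : ℝ → ℝ) (hf : ∀ ξ ∈ Ioo a b, 0 < f ξ)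
    (hd1 : ∀ ξ ∈ Ioo a b, DifferentiableAt ℝ (fun t => f t ^ m) ξ)
    (hd2 : ∀ ξ ∈ Ioo a b, DifferentiableAt ℝ (deriv fun t => f t ^ m) ξ)
    (hode : ∀ ξ ∈ Ioo a b,
      deriv (deriv fun t => f t ^ m) ξ
        + (((4 * m + 2) / (m + 1) - 1) / ξ) * deriv (fun t => f t ^ m) ξ
        - f ξ / (m - 1) + ξ ^ (2 * (m - 1) / (m + 1)) * f ξ ^ m = 0)
    (F : ℝ → ℝ)
    (hF : ∀ η : ℝ, F η =
      ((2 * m / (m + 1)) * η) ^ (1 / m) * f (((2 * m / (m + 1)) * η) ^ ((m + 1) / (2 * m)))) :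
    ∀ η : ℝ, 0 < η → ((2 * m / (m + 1)) * η) ^ ((m + 1) / (2 * m)) ∈ Ioo a b →
      deriv (deriv fun t => F t ^ m) η - F η / (m - 1) + F η ^ m = 0 := by
  intro η₀ hη₀ hξ₀
  have hm0 : (0:ℝ) < m := by linarith
  have hm1 : (0:ℝ) < m + 1 := by linarith
  set c : ℝ := 2 * m / (m + 1) with hc
  set α : ℝ := (m + 1) / (2 * m) with hα
  set K : ℝ := (4 * m + 2) / (m + 1) - 1 with hK
  set g : ℝ → ℝ := fun t => f t ^ m with hg
  set g1 : ℝ → ℝ := deriv g with hg1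
  set g2 : ℝ → ℝ := deriv g1 with hg2
  have hc0 : 0 < c := by rw [hc]; positivity
  have hα0 : 0 < α := by rw [hα]; positivity
  have hcα : c * α = 1 := by rw [hc, hα]; field_simp [hm0.ne', hm1.ne']
  -- the open set U
  set U : Set ℝ := Ioi 0 ∩ (fun η => (c * η) ^ α) ⁻¹' (Ioo a b) with hU
  have hUopen : IsOpen U := by
    apply ContinuousOn.isOpen_inter_preimage ?_ isOpen_Ioi isOpen_Ioo
    exact ((continuous_const.mul continuous_id).continuousOn).rpow_const
      (fun x _ => Or.inr hα0.le)
  have hη₀U : η₀ ∈ U := ⟨hη₀, hξ₀⟩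
  -- F^m on U
  have hFm : ∀ η ∈ U, F η ^ m = c * η * g ((c * η) ^ α) := by
    intro η hη
    obtain ⟨hη0, hηξ⟩ := hη
    have hx : (0:ℝ) < c * η := mul_pos hc0 hη0
    have hfpos := hf _ hηξ
    rw [hF η, Real.mul_rpow (Real.rpow_nonneg hx.le _) hfpos.le,
      ← Real.rpow_mul hx.le, one_div, inv_mul_cancel₀ (ne_of_gt hm0), Real.rpow_one]
  -- first derivative of F^m on U
  have hs : ∀ η ∈ U, HasDerivAt (fun t => F t ^ m)
      (c * g ((c * η) ^ α) + (c * η) ^ α * g1 ((c * η) ^ α)) η := by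
    intro η hη
    obtain ⟨hη0, hηξ⟩ := hη
    have hx : (0:ℝ) < c * η := mul_pos hc0 hη0
    have h1 : HasDerivAt (fun t : ℝ => c * t) c η := by
      simpa using (hasDerivAt_id η).const_mul c
    have h2 : HasDerivAt (fun t : ℝ => (c * t) ^ α) (c * α * (c * η) ^ (α - 1)) η :=
      h1.rpow_const (Or.inl (ne_of_gt hx))
    have h3 : HasDerivAt g (g1 ((c * η) ^ α)) ((c * η) ^ α) := (hd1 _ hηξ).hasDerivAt
    have h4 : HasDerivAt (fun t => g ((c * t) ^ α))
        (g1 ((c * η) ^ α) * (c * α * (c * η) ^ (α - 1))) η := by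
      have := h3.comp η h2; exact this
    have h5 : HasDerivAt (fun t : ℝ => c * t * g ((c * t) ^ α)) _ η := h1.mul h4
    have hxa : (c * η) * (c * η) ^ (α - 1) = (c * η) ^ α := by
      have h := (Real.rpow_add hx 1 (α - 1)).symm
      rw [Real.rpow_one] at h
      rw [h]
      congr 1
      ring
    have heq : HasDerivAt (fun t : ℝ => c * t * g ((c * t) ^ α))
        (c * g ((c * η) ^ α) + (c * η) ^ α * g1 ((c * η) ^ α)) η := by
      convert h5 using 1
      rw [show c * η * (g1 ((c * η) ^ α) * (c * α * (c * η) ^ (α - 1)))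
          = (c * α) * ((c * η) * (c * η) ^ (α - 1)) * g1 ((c * η) ^ α) from by ring,
        hcα, hxa, one_mul]
    have hev : (fun t => F t ^ m) =ᶠ[nhds η] fun t => c * t * g ((c * t) ^ α) := by
      filter_upwards [hUopen.mem_nhds ⟨hη0, hηξ⟩] with t ht using hFm t ht
    exact heq.congr_of_eventuallyEq hev
  set φ : ℝ → ℝ := fun η => c * g ((c * η) ^ α) + (c * η) ^ α * g1 ((c * η) ^ α) with hφ
  have hderiv1 : deriv (fun t => F t ^ m) =ᶠ[nhds η₀] φ := by
    filter_upwards [hUopen.mem_nhds hη₀U] with t ht using (hs t ht).deriv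
  have hdd : deriv (deriv fun t => F t ^ m) η₀ = deriv φ η₀ := hderiv1.deriv_eq
  -- second derivative
  have hx : (0:ℝ) < c * η₀ := mul_pos hc0 hη₀
  have h1 : HasDerivAt (fun t : ℝ => c * t) c η₀ := by
    simpa using (hasDerivAt_id η₀).const_mul c
  have h2 : HasDerivAt (fun t : ℝ => (c * t) ^ α) (c * α * (c * η₀) ^ (α - 1)) η₀ :=
    h1.rpow_const (Or.inl (ne_of_gt hx))
  have h3 : HasDerivAt g1 (g2 ((c * η₀) ^ α)) ((c * η₀) ^ α) := (hd2 _ hξ₀).hasDerivAt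
  have h3' : HasDerivAt g (g1 ((c * η₀) ^ α)) ((c * η₀) ^ α) := (hd1 _ hξ₀).hasDerivAt
  have hA : HasDerivAt (fun η : ℝ => c * g ((c * η) ^ α))
      (c * (g1 ((c * η₀) ^ α) * (c * α * (c * η₀) ^ (α - 1)))) η₀ :=
    (HasDerivAt.comp (h₂ := g) η₀ h3' h2).const_mul c
  have hB : HasDerivAt (fun η : ℝ => (c * η) ^ α * g1 ((c * η) ^ α))
      (c * α * (c * η₀) ^ (α - 1) * g1 ((c * η₀) ^ α)
        + (c * η₀) ^ α * (g2 ((c * η₀) ^ α) * (c * α * (c * η₀) ^ (α - 1)))) η₀ :=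
    h2.mul (HasDerivAt.comp (h₂ := g1) η₀ h3 h2)
  have hφ' : HasDerivAt φ
      (c * (g1 ((c * η₀) ^ α) * (c * α * (c * η₀) ^ (α - 1)))
        + (c * α * (c * η₀) ^ (α - 1) * g1 ((c * η₀) ^ α)
          + (c * η₀) ^ α * (g2 ((c * η₀) ^ α) * (c * α * (c * η₀) ^ (α - 1))))) η₀ :=
    hA.add hB
  have hsP : c * α * (c * η₀) ^ (α - 1) = (c * η₀) ^ (α - 1) := by
    rw [hcα, one_mul]
  rw [hsP] at hφ'
  -- helper identities
  have hQpos : (0:ℝ) < (c * η₀) ^ α := Real.rpow_pos_of_pos hx α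
  have e1 : (c * η₀) ^ (α - 1) * (c * η₀) ^ α = (c * η₀) ^ (1 / m) := by
    rw [← Real.rpow_add hx, show α - 1 + α = 1 / m from by rw [hα]; field_simp [hm0.ne']; ring]
  have e2 : (c * η₀) ^ (α - 1) * (c * η₀) ^ α * ((c * η₀) ^ α) ^ (2 * (m - 1) / (m + 1))
      = c * η₀ := by
    rw [← Real.rpow_mul hx.le, ← Real.rpow_add hx, ← Real.rpow_add hx]
    rw [show α - 1 + α + α * (2 * (m - 1) / (m + 1)) = 1 from by rw [hα]; field_simp [hm0.ne', hm1.ne']; ring,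
      Real.rpow_one]
  have e3 : (c * η₀) ^ α * ((c * η₀) ^ α)⁻¹ = 1 := mul_inv_cancel₀ hQpos.ne'
  have e4 : c + 1 = K := by rw [hc, hK]; field_simp; ring
  have hode' := hode _ hξ₀
  -- assemble
  rw [hdd, hφ'.deriv, hFm η₀ hη₀U, hF η₀]
  simp only [hg]
  set u : ℝ := f ((c * η₀) ^ α) with hu
  set A : ℝ := g1 ((c * η₀) ^ α) with hA'
  set B : ℝ := g2 ((c * η₀) ^ α) with hB'
  set P : ℝ := (c * η₀) ^ (α - 1) with hP
  set Q : ℝ := (c * η₀) ^ α with hQ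
  linear_combination (P * Q) * hode' + (u / (m - 1)) * e1 - u ^ m * e2 - P * K * A * e3
    + P * A * e4
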